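/- Let A = {00, 01, 10, 02} ⊂ {0,1,2}^2 and let E ⊂ {0,1,2}^ℤ be the set of bi-infinite concatenations (aligned at even positions) of blocks from A, and set X := E ∪ σ(E). Then the subshift (X,σ) is not a subshift of finite type; in particular, (X,σ) does not satisfy the shadowing property. -/

import Mathlib

/-- The two-sided shift map on `(Fin 3)^ℤ`. -/
def shiftZ (x : ℤ → Fin 3) : ℤ → Fin 3 := fun i => x (i + 1)

/-- A subset of the two-sided full shift is a subshift of finite type if it is defined
by forbidding a set of words of some fixed length `n`. -/
def IsSFT (X : Set (ℤ → Fin 3)) : Prop :=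
  ∃ (n : ℕ) (F : Set (Fin n → Fin 3)),
    X = {x | ∀ i : ℤ, (fun j : Fin n => x (i + (j : ℕ))) ∉ F}

-- a (non-canonical) metric on `Fin 3` and on `(Fin 3)^ℤ`
local instance : MetricSpace (Fin 3) :=
  MetricSpace.induced Fin.val Fin.val_injective inferInstance

attribute [local instance] PiCountable.metricSpace

/-- The shadowing property for the restriction of a map `f` to a subset `S`. -/
def HasShadowingOn {Z : Type*} [MetricSpace Z] (f : Z → Z) (S : Set Z) : Prop :=
  ∀ ε : ℝ, 0 < ε → ∃ δ : ℝ, 0 < δ ∧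
    ∀ x : ℕ → Z, (∀ n, x n ∈ S) → (∀ n, dist (f (x n)) (x (n + 1)) < δ) →
      ∃ z ∈ S, ∀ n, dist (f^[n] z) (x n) < ε

/-! ### Auxiliary material -/

/-- The "delta" configuration: a single `2` at position `p`, zeros elsewhere. -/
def ddP (p : ℤ) : ℤ → Fin 3 := fun i => if i = p then 2 else 0

lemma shiftZ_iterate (z : ℤ → Fin 3) (n : ℕ) (i : ℤ) : shiftZ^[n] z i = z (i + n) := by
  induction n generalizing z i with
  | zero => simp
  | succ m ih =>
    rw [Function.iterate_succ_apply, ih]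
    simp only [shiftZ]
    congr 1
    push_cast
    ring

lemma shiftZ_ddP (p : ℤ) : shiftZ (ddP p) = ddP (p - 1) := by
  funext i
  simp only [shiftZ, ddP]
  by_cases h : i = p - 1
  · rw [if_pos (by omega), if_pos h]
  · rw [if_neg (by omega), if_neg h]

lemma shiftZ_iterate_ddP (p : ℤ) (n : ℕ) : shiftZ^[n] (ddP p) = ddP (p - n) := by
  funext i
  rw [shiftZ_iterate]
  simp only [ddP]
  by_cases h : i = p - n
  · rw [if_pos (by omega), if_pos h]
  · rw [if_neg (by omega), if_neg h]

lemma coord_eq_of_dist_lt {f g : ℤ → Fin 3} {i : ℤ}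
    (h1 : dist f g < (1/2:ℝ)^(Encodable.encode i)) (h2 : dist f g < 1) : f i = g i := by
  have h := PiCountable.dist_le_dist_pi_of_dist_lt (by rw [← one_div]; exact h1 : dist f g < 2⁻¹ ^ Encodable.encode i)
  by_contra hne
  have : (1:ℝ) ≤ dist (f i) (g i) :=
    Nat.pairwise_one_le_dist (fun hv => hne (Fin.val_injective hv))
  linarith

lemma dist_le_two_pow {f g : ℤ → Fin 3} {p q : ℤ} (h : ∀ i, i ≠ p → i ≠ q → f i = g i) :
    dist f g ≤ (1/2:ℝ)^(Encodable.encode p) + (1/2:ℝ)^(Encodable.encode q) := by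
  rw [PiCountable.dist_eq_tsum, ← one_div]
  have hsum1 : Summable (fun i : ℤ => if i = p then (1/2:ℝ)^(Encodable.encode p) else 0) :=
    (hasSum_ite_eq p _).summable
  have hsum2 : Summable (fun i : ℤ => if i = q then (1/2:ℝ)^(Encodable.encode q) else 0) :=
    (hasSum_ite_eq q _).summable
  calc ∑' i : ℤ, min ((1 / 2) ^ Encodable.encode i : ℝ) (dist (f i) (g i))
      ≤ ∑' i : ℤ, ((if i = p then (1/2:ℝ)^(Encodable.encode p) else 0)
          + (if i = q then (1/2:ℝ)^(Encodable.encode q) else 0)) := by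
        refine Summable.tsum_le_tsum (fun i => ?_) (by simpa only [one_div] using PiCountable.dist_summable f g) (hsum1.add hsum2)
        by_cases hp : i = p
        · subst hp
          refine le_trans (min_le_left _ _) ?_
          have : (0:ℝ) ≤ (if i = q then (1/2:ℝ)^(Encodable.encode q) else 0) := by positivity
          simp only [if_pos rfl, if_true]
          linarith
        · by_cases hq : i = q
          · subst hq
            refine le_trans (min_le_left _ _) ?_
            simp only [if_pos rfl, if_true, if_neg hp, zero_add, le_refl]
          · rw [h i hp hq]
            simp [hp, hq, dist_self]
    _ = (1/2:ℝ)^(Encodable.encode p) + (1/2:ℝ)^(Encodable.encode q) := by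
        rw [Summable.tsum_add hsum1 hsum2, tsum_ite_eq, tsum_ite_eq]

/-- With `E` the set of bi-infinite concatenations (aligned at even
positions) of the blocks `00, 01, 10, 02` and `X := E ∪ σ(E)`, the subshift `(X, σ)`
is not of finite type; in particular it does not have the shadowing property. -/
theorem union_subshift_not_SFT
    (E X : Set (ℤ → Fin 3))
    (hE : E = {x | ∀ k : ℤ, (x (2 * k), x (2 * k + 1)) ∈
      ({(0, 0), (0, 1), (1, 0), (0, 2)} : Set (Fin 3 × Fin 3))})
    (hX : X = E ∪ shiftZ '' E) :
    ¬ IsSFT X ∧ ¬ HasShadowingOn shiftZ X := by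
  -- the delta configurations are all in X
  have memE : ∀ p : ℤ, Odd p → ddP p ∈ E := by
    rintro p ⟨m, hm⟩
    rw [hE]
    intro k
    simp only [ddP]
    rw [if_neg (by omega)]
    by_cases h : 2 * k + 1 = p
    · rw [if_pos h]; simp
    · rw [if_neg h]; simp
  have memX : ∀ p : ℤ, ddP p ∈ X := by
    intro p
    rw [hX]
    rcases Int.even_or_odd p with he | ho
    · right
      refine ⟨ddP (p + 1), memE _ (by rcases he with ⟨m, hm⟩; exact ⟨m, by omega⟩), ?_⟩
      rw [shiftZ_ddP, add_sub_cancel_right]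
    · exact Or.inl (memE p ho)
  -- a configuration with a `2` at position `0` and at an odd position `M` is not in X
  have key : ∀ (z : ℤ → Fin 3), z 0 = 2 → ∀ M : ℤ, Odd M → z M = 2 → z ∉ X := by
    rintro z h0 M ⟨m, hm⟩ hM hmem
    rw [hX] at hmem
    rw [hE] at hmem
    rcases hmem with hz | ⟨w, hw, hwz⟩
    · have := hz 0
      rw [mul_zero, zero_add, h0] at this
      simp at this
    · have hww : ∀ i : ℤ, w (i + 1) = z i := fun i => congrFun hwz i
      have h1 : w (2 * (m + 1)) = 2 := by
        have := hww M
        rw [hM] at this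
        rw [show 2 * (m + 1) = M + 1 by omega, this]
      have := hw (m + 1)
      rw [h1] at this
      simp at this
  constructor
  · -- not SFT
    rintro ⟨n, F, hF⟩
    set M : ℤ := 2 * n + 1 with hMdef
    set z : ℤ → Fin 3 := fun i => if i = 0 ∨ i = M then 2 else 0 with hz
    have hz0 : z 0 = 2 := by simp [hz]
    have hzM : z M = 2 := by simp [hz]
    have hznot := key z hz0 M ⟨n, rfl⟩ hzM
    rw [hF] at hznot
    refine hznot ?_
    intro i
    by_cases hcase : i + n ≤ M
    · have hwin : (fun j : Fin n => z (i + (j : ℕ))) = (fun j : Fin n => ddP 0 (i + (j : ℕ))) := by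
        funext j
        have hj : ((j : ℕ) : ℤ) < n := by exact_mod_cast j.isLt
        simp only [hz, ddP]
        by_cases h0 : i + (j : ℕ) = 0
        · rw [if_pos (Or.inl h0), if_pos h0]
        · rw [if_neg (by push_neg; exact ⟨h0, by omega⟩), if_neg h0]
      rw [hwin]
      have := memX 0
      rw [hF] at this
      exact this i
    · have hwin : (fun j : Fin n => z (i + (j : ℕ))) = (fun j : Fin n => ddP M (i + (j : ℕ))) := by
        funext j
        have hj : ((j : ℕ) : ℤ) < n := by exact_mod_cast j.isLt
        have hj0 : (0:ℤ) ≤ ((j : ℕ) : ℤ) := Int.natCast_nonneg _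
        simp only [hz, ddP]
        by_cases h0 : i + (j : ℕ) = M
        · rw [if_pos (Or.inr h0), if_pos h0]
        · rw [if_neg (by push_neg; exact ⟨by omega, h0⟩), if_neg h0]
      rw [hwin]
      have := memX M
      rw [hF] at this
      exact this i
  · -- no shadowing
    intro hsh
    set ε : ℝ := min ((1/2:ℝ)^(Encodable.encode (0:ℤ))) 1 with hε
    have hεpos : 0 < ε := lt_min (by positivity) one_pos
    obtain ⟨δ, hδpos, hδ⟩ := hsh ε hεpos
    obtain ⟨K, hK⟩ := exists_pow_lt_of_lt_one (half_pos hδpos) (by norm_num : (1/2:ℝ) < 1)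
    -- find a bound B such that |i| > B implies encode i > K
    have hfin : {i : ℤ | Encodable.encode i ≤ K}.Finite := by
      have : {i : ℤ | Encodable.encode i ≤ K} = Encodable.encode ⁻¹' (Set.Iic K) := rfl
      rw [this]
      exact (Set.finite_Iic K).preimage (Encodable.encode_injective.injOn)
    obtain ⟨B, hB⟩ := (hfin.image Int.natAbs).bddAbove
    have hbig : ∀ i : ℤ, (B : ℤ) < |i| → K < Encodable.encode i := by
      intro i hi
      by_contra h
      push_neg at h
      have : i.natAbs ≤ B := hB (Set.mem_image_of_mem _ h)
      rw [Int.abs_eq_natAbs] at hi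
      omega
    have hpow : ∀ i : ℤ, (B : ℤ) < |i| → (1/2:ℝ)^(Encodable.encode i) < δ / 2 := by
      intro i hi
      refine lt_of_le_of_lt ?_ hK
      exact pow_le_pow_of_le_one (by norm_num) (by norm_num) (hbig i hi).le
    set T : ℕ := B + 1 with hT
    set M : ℕ := 2 * T + 1 with hM
    -- the pseudo-orbit
    set x : ℕ → (ℤ → Fin 3) := fun n => if n < T then ddP (-(n:ℤ)) else ddP ((M:ℤ) - n) with hx
    have hxmem : ∀ n, x n ∈ X := by
      intro n
      simp only [hx]
      split <;> exact memX _
    have hxpseudo : ∀ n, dist (shiftZ (x n)) (x (n + 1)) < δ := by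
      intro n
      rcases lt_trichotomy (n + 1) T with h | h | h
      · have hn : n < T := by omega
        simp only [hx, if_pos h, if_pos hn, shiftZ_ddP]
        rw [show (-(n:ℤ) - 1) = -((n:ℕ)+1:ℕ) by push_cast; ring]
        rw [dist_self]
        exact hδpos
      · have hn : n < T := by omega
        simp only [hx, if_pos hn, if_neg (by omega : ¬ n + 1 < T), shiftZ_ddP]
        have h1 : (-(n:ℤ) - 1) = -(T:ℤ) := by omega
        have h2 : ((M:ℤ) - ((n:ℕ)+1:ℕ)) = (T:ℤ) + 1 := by push_cast; omega
        rw [h1, h2]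
        have hdiff : ∀ i : ℤ, i ≠ -(T:ℤ) → i ≠ (T:ℤ)+1 → ddP (-(T:ℤ)) i = ddP ((T:ℤ)+1) i := by
          intro i hi1 hi2
          simp only [ddP, if_neg hi1, if_neg hi2]
        calc dist (ddP (-(T:ℤ))) (ddP ((T:ℤ)+1))
            ≤ (1/2:ℝ)^(Encodable.encode (-(T:ℤ))) + (1/2:ℝ)^(Encodable.encode ((T:ℤ)+1)) :=
              dist_le_two_pow hdiff
          _ < δ / 2 + δ / 2 := by
              refine add_lt_add (hpow _ ?_) (hpow _ ?_)
              · rw [abs_neg, abs_of_nonneg (by positivity)]; omega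
              · rw [abs_of_nonneg (by positivity)]; omega
          _ = δ := add_halves δ
      · have hn : ¬ n < T := by omega
        simp only [hx, if_neg hn, if_neg (by omega : ¬ n + 1 < T), shiftZ_ddP]
        rw [show ((M:ℤ) - n - 1) = (M:ℤ) - ((n:ℕ)+1:ℕ) by push_cast; ring]
        rw [dist_self]
        exact hδpos
    obtain ⟨z, hzX, hztr⟩ := hδ x hxmem hxpseudo
    -- the traced point has z n = x n 0 for every n : ℕ
    have hcoord : ∀ n : ℕ, z (n:ℤ) = x n 0 := by
      intro n
      have h1 : dist (shiftZ^[n] z) (x n) < (1/2:ℝ)^(Encodable.encode (0:ℤ)) :=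
        lt_of_lt_of_le (hztr n) (min_le_left _ _)
      have h2 : dist (shiftZ^[n] z) (x n) < 1 := lt_of_lt_of_le (hztr n) (min_le_right _ _)
      have := coord_eq_of_dist_lt h1 h2
      rw [shiftZ_iterate, zero_add] at this
      exact this
    have hz0 : z 0 = 2 := by
      have := hcoord 0
      simp only [hx, if_pos (show 0 < T by omega)] at this
      simpa [ddP] using this
    have hzM : z (M:ℤ) = 2 := by
      have := hcoord M
      simp only [hx] at this
      rw [if_neg (by omega : ¬ M < T)] at this
      simpa [ddP] using this
    exact key z hz0 (M:ℤ) ⟨T, by rw [hM]; push_cast; ring⟩ hzM hzX
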